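/- For every real δ and every real p ≥ 1, |1 + δ|^p − 1 − pδ ≤ p·2^{p-1}·(δ^2 + |δ|^p). -/

import Mathlib

open Real

/-- `q ≤ 2^q` for `q ≥ 0`. -/
private lemma aux_le_two_rpow {q : ℝ} (hq : 0 ≤ q) : q ≤ (2:ℝ) ^ q := by
  rcases le_or_gt q 1 with h | h
  · exact h.trans (Real.one_le_rpow one_le_two hq)
  · have h2 := one_add_mul_self_le_rpow_one_add (s := 1) (by norm_num) h.le
    norm_num at h2
    linarith

/-- tangent upper bound: for `δ ≥ 0`, `(1+δ)^p ≤ 1 + p*δ*(1+δ)^(p-1)`. -/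
private lemma aux_tangent_pos {δ p : ℝ} (hδ : 0 ≤ δ) (hp : 1 ≤ p) :
    (1 + δ) ^ p ≤ 1 + p * δ * (1 + δ) ^ (p - 1) := by
  have h1 : (0:ℝ) < 1 + δ := by linarith
  have hs : (-1:ℝ) ≤ -δ / (1 + δ) := by
    rw [neg_div, neg_le_neg_iff, div_le_one h1]; linarith
  have hB := one_add_mul_self_le_rpow_one_add hs hp
  have h1s : 1 + -δ / (1 + δ) = (1 + δ)⁻¹ := by field_simp; ring
  rw [h1s, Real.inv_rpow h1.le] at hB
  have hpow : (0:ℝ) < (1 + δ) ^ p := Real.rpow_pos_of_pos h1 p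
  have hsub : (1 + δ) ^ (p - 1) = (1 + δ) ^ p / (1 + δ) := by
    rw [Real.rpow_sub h1, Real.rpow_one]
  have key := mul_le_mul_of_nonneg_left hB hpow.le
  rw [mul_inv_cancel₀ hpow.ne'] at key
  rw [hsub]
  have h1' : (1 + δ) ≠ 0 := h1.ne'
  field_simp at key ⊢
  nlinarith [key]

/-- tangent lower bound: for `0 ≤ x < 1`, `(1-x)^p + p*x*(1-x)^(p-1) ≤ 1`. -/
private lemma aux_tangent_neg {x p : ℝ} (hx : 0 ≤ x) (hx1 : x < 1) (hp : 1 ≤ p) :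
    (1 - x) ^ p + p * x * (1 - x) ^ (p - 1) ≤ 1 := by
  have h1 : (0:ℝ) < 1 - x := by linarith
  have hs : (-1:ℝ) ≤ x / (1 - x) := le_trans (by norm_num) (div_nonneg hx h1.le)
  have hB := one_add_mul_self_le_rpow_one_add hs hp
  have h1s : 1 + x / (1 - x) = (1 - x)⁻¹ := by field_simp; ring
  rw [h1s, Real.inv_rpow h1.le] at hB
  have hpow : (0:ℝ) < (1 - x) ^ p := Real.rpow_pos_of_pos h1 p
  have hsub : (1 - x) ^ (p - 1) = (1 - x) ^ p / (1 - x) := by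
    rw [Real.rpow_sub h1, Real.rpow_one]
  have key := mul_le_mul_of_nonneg_left hB hpow.le
  rw [mul_inv_cancel₀ hpow.ne'] at key
  rw [hsub]
  field_simp at key ⊢
  nlinarith [key]

/-- for `δ ≥ 0`, `q ≥ 0`: `(1+δ)^q ≤ 1 + 2^q * (δ + δ^q)`. -/
private lemma aux_chord {δ q : ℝ} (hδ : 0 ≤ δ) (hq : 0 ≤ q) :
    (1 + δ) ^ q ≤ 1 + 2 ^ q * (δ + δ ^ q) := by
  have h2 : (1:ℝ) ≤ 2 ^ q := Real.one_le_rpow one_le_two hq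
  have hδq : (0:ℝ) ≤ δ ^ q := Real.rpow_nonneg hδ q
  rcases le_or_gt q 1 with hq1 | hq1
  · -- concave case: (1+δ)^q ≤ 1 + q*δ
    have := rpow_one_add_le_one_add_mul_self (s := δ) (by linarith) hq hq1
    nlinarith [aux_le_two_rpow hq]
  · rcases le_or_gt δ 1 with hδ1 | hδ1
    · -- convexity chord between 1 and 2
      have hcx := (convexOn_rpow hq1.le).2 (Set.mem_Ici.2 (by norm_num : (0:ℝ) ≤ 1))
        (Set.mem_Ici.2 (by norm_num : (0:ℝ) ≤ 2))
        (show (0:ℝ) ≤ 1 - δ by linarith) hδ (by ring)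
      simp only [smul_eq_mul] at hcx
      have he : (1 - δ) * 1 + δ * 2 = 1 + δ := by ring
      rw [he] at hcx
      rw [Real.one_rpow] at hcx
      nlinarith [hcx]
    · -- δ ≥ 1: (1+δ)^q ≤ (2δ)^q = 2^q δ^q
      have h1 : (1 + δ) ^ q ≤ (2 * δ) ^ q := by
        apply Real.rpow_le_rpow (by linarith) (by linarith) hq
      rw [Real.mul_rpow (by norm_num) hδ] at h1
      nlinarith [h1]

/-- for `0 ≤ x < 1`, `q ≥ 0`: `1 - (1-x)^q ≤ 2^q * x`. -/
private lemma aux_drop {x q : ℝ} (hx : 0 ≤ x) (hx1 : x < 1) (hq : 0 ≤ q) :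
    1 - (1 - x) ^ q ≤ 2 ^ q * x := by
  have h1 : (0:ℝ) < 1 - x := by linarith
  have h2 : (1:ℝ) ≤ 2 ^ q := Real.one_le_rpow one_le_two hq
  rcases le_or_gt q 1 with hq1 | hq1
  · have : (1 - x) ^ (1:ℝ) ≤ (1 - x) ^ q :=
      Real.rpow_le_rpow_of_exponent_ge h1 (by linarith) hq1
    rw [Real.rpow_one] at this
    nlinarith
  · -- Bernoulli: (1 - x)^q ≥ 1 - q*x
    have := one_add_mul_self_le_rpow_one_add (s := -x) (by linarith) hq1.le
    have he : (1:ℝ) + -x = 1 - x := by ring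
    rw [he] at this
    nlinarith [aux_le_two_rpow hq]

theorem one_add_pow_sub_linear_upper_bound (δ p : ℝ) (hp : 1 ≤ p) :
    |1 + δ| ^ p - 1 - p * δ ≤ p * 2 ^ (p - 1) * (δ ^ 2 + |δ| ^ p) := by
  have hp0 : (0:ℝ) < p := by linarith
  have hq : (0:ℝ) ≤ p - 1 := by linarith
  have h2 : (1:ℝ) ≤ 2 ^ (p - 1) := Real.one_le_rpow one_le_two hq
  rcases le_or_gt 0 δ with hδ | hδ
  · -- δ ≥ 0
    rw [abs_of_nonneg (by linarith : (0:ℝ) ≤ 1 + δ), abs_of_nonneg hδ]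
    have hT := aux_tangent_pos hδ hp
    have hC := aux_chord hδ hq
    have hδq : (0:ℝ) ≤ δ ^ (p-1) := Real.rpow_nonneg hδ _
    have hsplit : δ ^ p = δ * δ ^ (p - 1) := by
      have : δ ^ p = δ ^ (1 + (p - 1)) := by ring_nf
      rw [this, Real.rpow_add' hδ (by simp; linarith), Real.rpow_one]
    -- (1+δ)^p - 1 - pδ ≤ pδ((1+δ)^{p-1} - 1) ≤ pδ·2^{p-1}(δ + δ^{p-1})
    have step : (1 + δ) ^ p - 1 - p * δ ≤ p * δ * ((1 + δ) ^ (p-1) - 1) := by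
      nlinarith [hT]
    calc (1 + δ) ^ p - 1 - p * δ ≤ p * δ * ((1 + δ) ^ (p-1) - 1) := step
      _ ≤ p * δ * (2 ^ (p-1) * (δ + δ ^ (p-1))) := by
          apply mul_le_mul_of_nonneg_left _ (by positivity)
          linarith [hC]
      _ = p * 2 ^ (p-1) * (δ ^ 2 + δ ^ p) := by rw [hsplit]; ring
  · set x := -δ with hxdef
    have hx : 0 < x := by simp [hxdef]; linarith
    have habs : |δ| = x := abs_of_neg hδ
    rw [habs]
    have hxp : (0:ℝ) ≤ x ^ p := Real.rpow_nonneg hx.le p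
    have hδx : δ = -x := by simp [hxdef]
    rcases lt_or_ge x 1 with hx1 | hx1
    · -- -1 < δ < 0
      have h1x : |1 + δ| = 1 - x := by rw [hδx]; rw [abs_of_pos (by linarith)]; ring
      rw [h1x, hδx]
      have hT := aux_tangent_neg hx.le hx1 hp
      have hD := aux_drop hx.le hx1 hq
      have hpw : (0:ℝ) ≤ (1 - x) ^ (p - 1) := Real.rpow_nonneg (by linarith) _
      -- (1-x)^p - 1 + px ≤ px(1 - (1-x)^{p-1}) ≤ px·2^{p-1}x
      have step : (1 - x) ^ p - 1 + p * x ≤ p * x * (1 - (1 - x) ^ (p-1)) := by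
        nlinarith [hT]
      have step2 : p * x * (1 - (1 - x) ^ (p-1)) ≤ p * x * (2 ^ (p-1) * x) := by
        apply mul_le_mul_of_nonneg_left hD (by positivity)
      nlinarith [step, step2,
        mul_nonneg (mul_nonneg hp0.le (le_trans zero_le_one h2)) hxp]
    · -- δ ≤ -1
      have h1x : |1 + δ| = x - 1 := by rw [hδx]; rw [abs_of_nonpos (by linarith)]; ring
      rw [h1x, hδx]
      have hb : (x - 1) ^ p ≤ x ^ p := Real.rpow_le_rpow (by linarith) (by linarith) hp0.le
      have hx2 : x ≤ x ^ 2 := by nlinarith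
      -- x^p + px ≤ p2^{p-1}(x² + x^p)
      have hkey : (1:ℝ) ≤ p * 2 ^ (p - 1) := by nlinarith
      nlinarith [mul_le_mul_of_nonneg_right hkey hxp,
        mul_le_mul_of_nonneg_right hkey (sq_nonneg x),
        mul_le_mul_of_nonneg_left hx2 hp0.le,
        mul_le_mul_of_nonneg_left (mul_le_mul_of_nonneg_left hx2 hp0.le) (le_trans zero_le_one h2)]
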